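/- Let d ≥ 2 and let f(z) = z + a₁/z + ⋯ + a_{d−1}/z^{d−1} − 1/(d·z^d) with a₁,…,a_{d−1} ∈ ℂ, regarded as a holomorphic function on ℂ ∖ {0}. If f is injective on 𝔻* = {z ∈ ℂ : |z| > 1}, then f′ has exactly d+1 zeros in ℂ ∖ {0} counted with multiplicity, all of these zeros lie on S¹, and they are simple and pairwise distinct; in other words, f has exactly d+1 distinct simple critical points, all lying on the unit circle. -/

import Mathlib

open Set Filter

noncomputable section

/-- The unit circle in `ℂ`. -/
def S1 : Set ℂ := {z : ℂ | ‖z‖ = 1}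

/-- The parametrization `x ↦ e^{2πix}` of the unit circle. -/
noncomputable def expMap (x : ℝ) : ℂ := Complex.exp (2 * Real.pi * Complex.I * x)

/-- The closed positively oriented arc from `a` to `b` on the unit circle. -/
def closedArc (a b : ℂ) : Set ℂ :=
  {z : ℂ | ∃ s t u : ℝ, a = expMap s ∧ z = expMap t ∧ b = expMap u ∧
    s ≤ t ∧ t ≤ u ∧ u < s + 1}

/-- The open positively oriented arc from `a` to `b` on the unit circle. -/
def openArc (a b : ℂ) : Set ℂ :=
  {z : ℂ | ∃ s t u : ℝ, a = expMap s ∧ z = expMap t ∧ b = expMap u ∧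
    s < t ∧ t < u ∧ u < s + 1}

/-- `f` restricted to the unit circle is a covering of signed degree `d`:
it lifts under `x ↦ e^{2πix}` to a continuous map `F` with `F (x+1) = F x + d`.
`d > 0` corresponds to an orientation-preserving covering of degree `d`, and
`d < 0` to an orientation-reversing covering of degree `|d|`. -/
def IsCircleCovering (f : ℂ → ℂ) (d : ℤ) : Prop :=
  ∃ F : ℝ → ℝ, Continuous F ∧ (∀ x : ℝ, f (expMap x) = expMap (F x)) ∧
    ∀ x : ℝ, F (x + 1) = F x + d

/-- The iterate `f^[m]` is an orientation-preserving circle covering. -/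
def OrientPresIter (f : ℂ → ℂ) (m : ℕ) : Prop :=
  ∃ e : ℤ, 0 < e ∧ IsCircleCovering (f^[m]) e

/-- The iterate `f^[m]` is an orientation-reversing circle covering. -/
def OrientRevIter (f : ℂ → ℂ) (m : ℕ) : Prop :=
  ∃ e : ℤ, e < 0 ∧ IsCircleCovering (f^[m]) e

/-- Expansivity of `f` on the unit circle. -/
def ExpansiveOn (f : ℂ → ℂ) : Prop :=
  ∃ δ : ℝ, 0 < δ ∧ ∀ a ∈ S1, ∀ b ∈ S1, a ≠ b →
    ∃ n : ℕ, δ < ‖f^[n] a - f^[n] b‖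

/-- `h` is an orientation-preserving homeomorphism of the unit circle:
it lifts to a continuous strictly increasing map `H : ℝ → ℝ` commuting with `x ↦ x + 1`. -/
def OPCircleHomeo (h : ℂ → ℂ) : Prop :=
  ∃ H : ℝ → ℝ, Continuous H ∧ StrictMono H ∧ (∀ x : ℝ, H (x + 1) = H x + 1) ∧
    ∀ x : ℝ, h (expMap x) = expMap (H x)

/-- A Markov partition `P(f; {a₀, …, a_r})` for a circle covering `f`. -/
structure MarkovPartition (f : ℂ → ℂ) (r : ℕ) (a : Fin (r + 1) → ℂ) : Prop where
  rpos : 1 ≤ r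
  /-- The points `a₀, …, a_r` lie on the unit circle in positive cyclic order. -/
  cyclic : ∃ x : Fin (r + 1) → ℝ, StrictMono x ∧ (∀ k, a k = expMap (x k)) ∧
    x (Fin.last r) < x 0 + 1
  /-- The closed arcs `A_k = [a_k, a_{k+1}]` cover the circle. -/
  cover : S1 ⊆ ⋃ k, closedArc (a k) (a (k + 1))
  /-- The arcs have pairwise disjoint interiors. -/
  disjInt : ∀ k j : Fin (r + 1), k ≠ j →
    openArc (a k) (a (k + 1)) ∩ openArc (a j) (a (j + 1)) = ∅
  /-- `f` is injective on each open arc. -/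
  injOn : ∀ k, Set.InjOn f (openArc (a k) (a (k + 1)))
  /-- The Markov property. -/
  markov : ∀ k j : Fin (r + 1),
    (f '' openArc (a k) (a (k + 1)) ∩ openArc (a j) (a (j + 1))).Nonempty →
    openArc (a j) (a (j + 1)) ⊆ f '' openArc (a k) (a (k + 1))
  /-- The set `{a₀, …, a_r}` is forward invariant. -/
  invariant : ∀ k, ∃ j, f (a k) = a j

/-- Condition (uv): piecewise conformal extensions on open sets `U_k`, `V_k` with
`⋃ {U_j : A_j ⊆ f(A_k)} ⊆ V_k`. -/
def CondUV (f : ℂ → ℂ) (r : ℕ) (a : Fin (r + 1) → ℂ) : Prop :=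
  ∃ (U V : Fin (r + 1) → Set ℂ) (fk : Fin (r + 1) → ℂ → ℂ),
    (∀ k, IsOpen (U k)) ∧ (∀ k, IsOpen (V k)) ∧
    (∀ k, openArc (a k) (a (k + 1)) ⊆ U k) ∧
    (∀ k, f '' openArc (a k) (a (k + 1)) ⊆ V k) ∧
    (∀ k, Set.InjOn (fk k) (U k)) ∧
    (∀ k, DifferentiableOn ℂ (fk k) (U k)) ∧
    (∀ k, fk k '' U k = V k) ∧
    (∀ k, Set.EqOn (fk k) f (openArc (a k) (a (k + 1)))) ∧
    (∀ k j, openArc (a j) (a (j + 1)) ⊆ f '' openArc (a k) (a (k + 1)) → U j ⊆ V k)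

/-- Condition (hol): the restriction of `f` to each closed arc of the partition extends
holomorphically to a neighborhood of either endpoint. -/
def CondHol (f : ℂ → ℂ) (r : ℕ) (a : Fin (r + 1) → ℂ) : Prop :=
  ∀ k : Fin (r + 1),
    (∃ W : Set ℂ, IsOpen W ∧ a k ∈ W ∧ ∃ g : ℂ → ℂ, DifferentiableOn ℂ g W ∧
      Set.EqOn g f (W ∩ closedArc (a k) (a (k + 1)))) ∧
    (∃ W : Set ℂ, IsOpen W ∧ a (k + 1) ∈ W ∧ ∃ g : ℂ → ℂ, DifferentiableOn ℂ g W ∧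
      Set.EqOn g f (W ∩ closedArc (a k) (a (k + 1))))

/-- `q` is the orientation-preserving period of the periodic point `a`:
the least `n ≥ 1` with `f^[n] a = a` and `f^[n]` orientation-preserving. -/
def OPPeriod (f : ℂ → ℂ) (a : ℂ) (q : ℕ) : Prop :=
  0 < q ∧ f^[q] a = a ∧ OrientPresIter f q ∧
    ∀ m : ℕ, 0 < m → m < q → ¬(f^[m] a = a ∧ OrientPresIter f m)

/-- The one-sided multiplier `λ(a⁺)` of the first return map `f^[q]` exists and equals `lam`. -/
def HasMultiplierPlus (f : ℂ → ℂ) (a : ℂ) (q : ℕ) (lam : ℝ) : Prop :=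
  0 ≤ lam ∧ ∃ z₀ ∈ S1, z₀ ≠ a ∧
    Filter.Tendsto (fun z : ℂ => (f^[q] z - a) / (z - a))
      (nhdsWithin a (openArc a z₀)) (nhds (lam : ℂ))

/-- The one-sided multiplier `λ(a⁻)` of the first return map `f^[q]` exists and equals `lam`. -/
def HasMultiplierMinus (f : ℂ → ℂ) (a : ℂ) (q : ℕ) (lam : ℝ) : Prop :=
  0 ≤ lam ∧ ∃ z₀ ∈ S1, z₀ ≠ a ∧
    Filter.Tendsto (fun z : ℂ => (f^[q] z - a) / (z - a))
      (nhdsWithin a (openArc z₀ a)) (nhds (lam : ℂ))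

/-- `a` is an isolated fixed point (on the circle) of the return map `f^[q]`. -/
def IsolatedFixedPt (f : ℂ → ℂ) (a : ℂ) (q : ℕ) : Prop :=
  ∃ ε : ℝ, 0 < ε ∧ ∀ z ∈ S1, z ≠ a → ‖z - a‖ < ε → f^[q] z ≠ z

/-- The return map `f^[q]` has, on the positive side of `a`, a holomorphic extension
with Taylor expansion `z + c (z - a)^(N+1) + O((z - a)^(N+2))`, `c ≠ 0`;
i.e. the parabolic point `a⁺` has `N(a⁺) = N`. -/
def TaylorPlus (f : ℂ → ℂ) (a : ℂ) (q : ℕ) (N : ℕ) : Prop :=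
  0 < N ∧ ∃ z₁ ∈ S1, z₁ ≠ a ∧ ∃ W : Set ℂ, IsOpen W ∧ closedArc a z₁ ⊆ W ∧
    ∃ g : ℂ → ℂ, DifferentiableOn ℂ g W ∧ Set.EqOn g (f^[q]) (closedArc a z₁) ∧
      ∃ c : ℂ, c ≠ 0 ∧
        Asymptotics.IsBigO (nhds a)
          (fun z : ℂ => g z - z - c * (z - a) ^ (N + 1))
          (fun z : ℂ => (z - a) ^ (N + 2))

/-- Negative-side version of `TaylorPlus`: the parabolic point `a⁻` has `N(a⁻) = N`. -/
def TaylorMinus (f : ℂ → ℂ) (a : ℂ) (q : ℕ) (N : ℕ) : Prop :=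
  0 < N ∧ ∃ z₁ ∈ S1, z₁ ≠ a ∧ ∃ W : Set ℂ, IsOpen W ∧ closedArc z₁ a ⊆ W ∧
    ∃ g : ℂ → ℂ, DifferentiableOn ℂ g W ∧ Set.EqOn g (f^[q]) (closedArc z₁ a) ∧
      ∃ c : ℂ, c ≠ 0 ∧
        Asymptotics.IsBigO (nhds a)
          (fun z : ℂ => g z - z - c * (z - a) ^ (N + 1))
          (fun z : ℂ => (z - a) ^ (N + 2))

/-- No iterate `f^[m'] a` with `m' < m` is a periodic point; used to express that
`m` is the minimal integer with `f^[m] a` periodic. -/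
def MinPreperiod (f : ℂ → ℂ) (a : ℂ) (m : ℕ) : Prop :=
  ∀ m' : ℕ, m' < m → ¬ ∃ n : ℕ, 0 < n ∧ f^[n] (f^[m'] a) = f^[m'] a

/-- `q` is the orientation-preserving period of the (pre)periodic point `a`. -/
def PrePeriodOf (f : ℂ → ℂ) (a : ℂ) (q : ℕ) : Prop :=
  ∃ m : ℕ, MinPreperiod f a m ∧ OPPeriod f (f^[m] a) q

/-- `a⁺` is hyperbolic with multiplier `lam > 1` (for preperiodic `a`, the multiplier is
taken at the periodic point on the orbit, with sides swapped if the connecting iterate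
is orientation-reversing). -/
def SideHypPlus (f : ℂ → ℂ) (a : ℂ) (lam : ℝ) : Prop :=
  1 < lam ∧ ∃ m q : ℕ, MinPreperiod f a m ∧ OPPeriod f (f^[m] a) q ∧
    ((OrientPresIter f m ∧ HasMultiplierPlus f (f^[m] a) q lam) ∨
     (OrientRevIter f m ∧ HasMultiplierMinus f (f^[m] a) q lam))

/-- `a⁻` is hyperbolic with multiplier `lam > 1`. -/
def SideHypMinus (f : ℂ → ℂ) (a : ℂ) (lam : ℝ) : Prop :=
  1 < lam ∧ ∃ m q : ℕ, MinPreperiod f a m ∧ OPPeriod f (f^[m] a) q ∧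
    ((OrientPresIter f m ∧ HasMultiplierMinus f (f^[m] a) q lam) ∨
     (OrientRevIter f m ∧ HasMultiplierPlus f (f^[m] a) q lam))

/-- `a⁺` is parabolic: the one-sided multiplier equals `1` and the relevant periodic point
is an isolated fixed point of its first return map. -/
def SideParPlus (f : ℂ → ℂ) (a : ℂ) : Prop :=
  ∃ m q : ℕ, MinPreperiod f a m ∧ OPPeriod f (f^[m] a) q ∧
    IsolatedFixedPt f (f^[m] a) q ∧
    ((OrientPresIter f m ∧ HasMultiplierPlus f (f^[m] a) q 1) ∨
     (OrientRevIter f m ∧ HasMultiplierMinus f (f^[m] a) q 1))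

/-- `a⁻` is parabolic. -/
def SideParMinus (f : ℂ → ℂ) (a : ℂ) : Prop :=
  ∃ m q : ℕ, MinPreperiod f a m ∧ OPPeriod f (f^[m] a) q ∧
    IsolatedFixedPt f (f^[m] a) q ∧
    ((OrientPresIter f m ∧ HasMultiplierMinus f (f^[m] a) q 1) ∨
     (OrientRevIter f m ∧ HasMultiplierPlus f (f^[m] a) q 1))

/-- `a⁺` is parabolic with multiplicity data `N(a⁺) = N`. -/
def SideParPlusN (f : ℂ → ℂ) (a : ℂ) (N : ℕ) : Prop :=
  ∃ m q : ℕ, MinPreperiod f a m ∧ OPPeriod f (f^[m] a) q ∧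
    IsolatedFixedPt f (f^[m] a) q ∧
    ((OrientPresIter f m ∧ HasMultiplierPlus f (f^[m] a) q 1 ∧
        TaylorPlus f (f^[m] a) q N) ∨
     (OrientRevIter f m ∧ HasMultiplierMinus f (f^[m] a) q 1 ∧
        TaylorMinus f (f^[m] a) q N))

/-- `a⁻` is parabolic with multiplicity data `N(a⁻) = N`. -/
def SideParMinusN (f : ℂ → ℂ) (a : ℂ) (N : ℕ) : Prop :=
  ∃ m q : ℕ, MinPreperiod f a m ∧ OPPeriod f (f^[m] a) q ∧
    IsolatedFixedPt f (f^[m] a) q ∧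
    ((OrientPresIter f m ∧ HasMultiplierMinus f (f^[m] a) q 1 ∧
        TaylorMinus f (f^[m] a) q N) ∨
     (OrientRevIter f m ∧ HasMultiplierPlus f (f^[m] a) q 1 ∧
        TaylorPlus f (f^[m] a) q N))

/-- `a` is symmetrically hyperbolic: `λ(a⁺) = λ(a⁻) > 1`. -/
def SymmHyperbolic (f : ℂ → ℂ) (a : ℂ) : Prop :=
  ∃ lam : ℝ, SideHypPlus f a lam ∧ SideHypMinus f a lam

/-- `a` is symmetrically parabolic: both sides parabolic with `N(a⁺) = N(a⁻)`. -/
def SymmParabolic (f : ℂ → ℂ) (a : ℂ) : Prop :=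
  ∃ N : ℕ, SideParPlusN f a N ∧ SideParMinusN f a N

/-- The distortion function `ρ_h(z, t)` of a circle homeomorphism `h`. -/
noncomputable def distortionAt (h : ℂ → ℂ) (z : ℂ) (t : ℝ) : ℝ :=
  max (‖h (expMap t * z) - h z‖ / ‖h (expMap (-t) * z) - h z‖)
      (‖h (expMap (-t) * z) - h z‖ / ‖h (expMap t * z) - h z‖)

/-- Condition (H/P→H/P): there is `μ > 0` matching parabolic sides of `a` to parabolic sides
of `b` with `N(a^±) = μ · N(b^±)`, and hyperbolic sides to hyperbolic sides with
`λ(b^±) = λ(a^±)^μ`. -/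
def CondHH (f g : ℂ → ℂ) (a b : ℂ) : Prop :=
  ∃ μ : ℝ, 0 < μ ∧
    (∀ N : ℕ, SideParPlusN f a N → ∃ N' : ℕ, SideParPlusN g b N' ∧ (N : ℝ) = μ * N') ∧
    (∀ N : ℕ, SideParMinusN f a N → ∃ N' : ℕ, SideParMinusN g b N' ∧ (N : ℝ) = μ * N') ∧
    (∀ lam : ℝ, SideHypPlus f a lam → SideHypPlus g b (lam ^ μ)) ∧
    (∀ lam : ℝ, SideHypMinus f a lam → SideHypMinus g b (lam ^ μ))

/-- Condition (H→P): `a⁺` and `a⁻` are hyperbolic and `b` is symmetrically parabolic. -/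
def CondHP (f g : ℂ → ℂ) (a b : ℂ) : Prop :=
  (∃ lam : ℝ, SideHypPlus f a lam) ∧ (∃ lam : ℝ, SideHypMinus f a lam) ∧ SymmParabolic g b

/-- The set `F_n = (f^[n-1])⁻¹({a₀, …, a_r}) ∩ S¹`. -/
def Fset (f : ℂ → ℂ) {r : ℕ} (a : Fin (r + 1) → ℂ) (n : ℕ) : Set ℂ :=
  {z : ℂ | z ∈ S1 ∧ f^[n - 1] z ∈ Set.range a}

/-- `A` is a complementary arc of `F_n`: the closure of a connected component
of `S¹ ∖ F_n`. -/
def IsComplArc (f : ℂ → ℂ) {r : ℕ} (a : Fin (r + 1) → ℂ) (n : ℕ) (A : Set ℂ) : Prop :=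
  ∃ z ∈ S1 \ Fset f a n, A = closure (connectedComponentIn (S1 \ Fset f a n) z)

/-- `φ` has relative distortion bounded by `M` on `X`. -/
def RelDistBdd (φ : ℂ → ℂ) (X : Set ℂ) (M : ℝ) : Prop :=
  ∀ A B : Set ℂ, A ⊆ X → B ⊆ X → 0 < Metric.diam B → 0 < Metric.diam (φ '' B) →
    M⁻¹ * (Metric.diam A / Metric.diam B) ≤ Metric.diam (φ '' A) / Metric.diam (φ '' B) ∧
    Metric.diam (φ '' A) / Metric.diam (φ '' B) ≤ M * (Metric.diam A / Metric.diam B)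

/-- `J` is a Jordan curve in `ℂ`. -/
def JordanCurve (J : Set ℂ) : Prop :=
  ∃ γ : ℂ → ℂ, ContinuousOn γ S1 ∧ Set.InjOn γ S1 ∧ γ '' S1 = J

/-- `J` is a welding curve for the circle homeomorphism `h`. -/
def IsWeldingPair (h : ℂ → ℂ) (J : Set ℂ) : Prop :=
  JordanCurve J ∧
  ∃ U V : Set ℂ, IsOpen U ∧ IsOpen V ∧ IsConnected U ∧ IsConnected V ∧
    Bornology.IsBounded U ∧ ¬ Bornology.IsBounded V ∧ Disjoint U V ∧
    U ∪ V = {z : ℂ | z ∉ J} ∧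
    ∃ H₁ H₂ : ℂ → ℂ,
      ContinuousOn H₁ (Metric.closedBall 0 1) ∧
      Set.InjOn H₁ (Metric.closedBall 0 1) ∧
      DifferentiableOn ℂ H₁ (Metric.ball 0 1) ∧
      H₁ '' Metric.ball 0 1 = U ∧
      H₁ '' Metric.closedBall 0 1 = U ∪ J ∧
      ContinuousOn H₂ {z : ℂ | 1 ≤ ‖z‖} ∧
      Set.InjOn H₂ {z : ℂ | 1 ≤ ‖z‖} ∧
      DifferentiableOn ℂ H₂ {z : ℂ | 1 < ‖z‖} ∧
      H₂ '' {z : ℂ | 1 < ‖z‖} = V ∧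
      H₂ '' {z : ℂ | 1 ≤ ‖z‖} = V ∪ J ∧
      Filter.Tendsto (fun z : ℂ => ‖H₂ z‖)
        (Filter.comap (fun z : ℂ => ‖z‖) Filter.atTop) Filter.atTop ∧
      ∀ z ∈ S1, H₂ (h z) = H₁ z

/-- `h` is a welding homeomorphism. -/
def IsWeldingHomeo (h : ℂ → ℂ) : Prop := ∃ J : Set ℂ, IsWeldingPair h J

/-- `J'` is the image of `J` under a Möbius transformation (whose pole avoids `J`). -/
def MoebiusEquivCurves (J J' : Set ℂ) : Prop :=
  ∃ p q u v : ℂ, p * v - q * u ≠ 0 ∧ (∀ z ∈ J, u * z + v ≠ 0) ∧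
    J' = (fun z : ℂ => (p * z + q) / (u * z + v)) '' J

/-- The inversion (anti-conformal reflection) in the circle with center `c` and radius `ρ`. -/
noncomputable def circleInv (c : ℂ) (ρ : ℝ) (z : ℂ) : ℂ :=
  c + (ρ : ℂ) ^ 2 / ((starRingEnd ℂ) z - (starRingEnd ℂ) c)

end
section AuxCrit

open Filter Topology Asymptotics Polynomial


noncomputable def critP (d : ℕ) (a : ℕ → ℂ) : Polynomial ℂ :=
  X^(d+1) + C 1 - ∑ i ∈ Finset.Icc 1 (d-1), C ((i:ℂ) * a i) * X^(d - i)

lemma critP_monic (d : ℕ) (hd : 2 ≤ d) (a : ℕ → ℂ) : (critP d a).Monic := by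
  have h1 : (X^(d+1) : Polynomial ℂ).Monic := monic_X_pow _
  have h2 : (C 1 - ∑ i ∈ Finset.Icc 1 (d-1), C ((i:ℂ) * a i) * X^(d - i)).degree
      < (X^(d+1) : Polynomial ℂ).degree := by
    rw [degree_X_pow]
    refine lt_of_le_of_lt (degree_sub_le _ _) ?_
    rw [max_lt_iff]
    constructor
    · exact lt_of_le_of_lt degree_C_le (by exact_mod_cast Nat.succ_pos d)
    · refine lt_of_le_of_lt (degree_sum_le _ _) ?_
      rw [Finset.sup_lt_iff (by exact_mod_cast WithBot.bot_lt_coe (d+1))]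
      intro i hi
      refine lt_of_le_of_lt (degree_C_mul_X_pow_le _ _) ?_
      exact_mod_cast Nat.lt_succ_of_le (Nat.sub_le d i)
  have := h1.add_of_left (q := C 1 - ∑ i ∈ Finset.Icc 1 (d-1), C ((i:ℂ) * a i) * X^(d - i)) h2
  simpa [critP, sub_eq_add_neg, add_assoc] using this

lemma critP_degree (d : ℕ) (hd : 2 ≤ d) (a : ℕ → ℂ) : (critP d a).degree = d + 1 := by
  have h2 : (C 1 - ∑ i ∈ Finset.Icc 1 (d-1), C ((i:ℂ) * a i) * X^(d - i)).degree
      < (X^(d+1) : Polynomial ℂ).degree := by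
    rw [degree_X_pow]
    refine lt_of_le_of_lt (degree_sub_le _ _) ?_
    rw [max_lt_iff]
    constructor
    · exact lt_of_le_of_lt degree_C_le (by exact_mod_cast Nat.succ_pos d)
    · refine lt_of_le_of_lt (degree_sum_le _ _) ?_
      rw [Finset.sup_lt_iff (by exact_mod_cast WithBot.bot_lt_coe (d+1))]
      intro i hi
      refine lt_of_le_of_lt (degree_C_mul_X_pow_le _ _) ?_
      exact_mod_cast Nat.lt_succ_of_le (Nat.sub_le d i)
  have := degree_add_eq_left_of_degree_lt h2
  rw [degree_X_pow] at this
  have heq : critP d a = X^(d+1) + (C 1 - ∑ i ∈ Finset.Icc 1 (d-1), C ((i:ℂ) * a i) * X^(d - i)) := by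
    rw [critP]; ring
  rw [heq, this]; norm_cast

lemma critP_natDegree (d : ℕ) (hd : 2 ≤ d) (a : ℕ → ℂ) : (critP d a).natDegree = d + 1 :=
  natDegree_eq_of_degree_eq_some (critP_degree d hd a)

lemma critP_ne_zero (d : ℕ) (hd : 2 ≤ d) (a : ℕ → ℂ) : critP d a ≠ 0 :=
  (critP_monic d hd a).ne_zero

lemma critP_eval_zero (d : ℕ) (hd : 2 ≤ d) (a : ℕ → ℂ) : (critP d a).eval 0 = 1 := by
  simp only [critP, eval_sub, eval_add, eval_pow, eval_X, eval_C, eval_finset_sum, eval_mul]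
  rw [zero_pow (by omega)]
  have : ∀ i ∈ Finset.Icc 1 (d-1), ((i:ℂ) * a i) * (0:ℂ)^(d-i) = 0 := by
    intro i hi
    simp only [Finset.mem_Icc] at hi
    rw [zero_pow (by omega), mul_zero]
  rw [Finset.sum_congr rfl this]
  simp

lemma critP_roots_card (d : ℕ) (hd : 2 ≤ d) (a : ℕ → ℂ) :
    (critP d a).roots.card = d + 1 := by
  rw [splits_iff_card_roots.mp (IsAlgClosed.splits _), critP_natDegree d hd a]

lemma critP_roots_abs_prod (d : ℕ) (hd : 2 ≤ d) (a : ℕ → ℂ) :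
    ((critP d a).roots.map (fun z : ℂ => ‖z‖)).prod = 1 := by
  have hsplit := IsAlgClosed.splits (critP d a)
  have heq := hsplit.eq_prod_roots_of_monic (critP_monic d hd a)
  have h0 : (1:ℂ) = ((critP d a).roots.map (fun r => 0 - r)).prod := by
    conv_lhs => rw [← critP_eval_zero d hd a]
    conv_lhs => rw [heq]
    rw [eval_multiset_prod, Multiset.map_map]
    congr 1
    apply Multiset.map_congr rfl
    intro r _
    simp
  have := congrArg (normHom : ℂ →*₀ ℝ) h0
  rw [map_one, map_multiset_prod, Multiset.map_map] at this
  rw [this]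
  congr 1
  apply Multiset.map_congr rfl
  intro r _
  simp

lemma f_hasDerivAt (d : ℕ) (hd : 2 ≤ d) (a : ℕ → ℂ) (z : ℂ) (hz : z ≠ 0) :
    HasDerivAt (fun z : ℂ => z + (∑ i ∈ Finset.Icc 1 (d - 1), a i / z ^ i) - 1 / ((d : ℂ) * z ^ d))
      ((critP d a).eval z / z ^ (d + 1)) z := by
  have hdz : ((d:ℂ)) ≠ 0 := Nat.cast_ne_zero.mpr (by omega)
  have hsum : ∀ i ∈ Finset.Icc 1 (d-1), HasDerivAt (fun z : ℂ => a i / z ^ i)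
      (a i * ((↑(-(i:ℤ)) : ℂ) * z ^ (-(i:ℤ) - 1))) z := by
    intro i hi
    have h0 : (fun z : ℂ => a i / z ^ i) = fun z : ℂ => a i * z ^ (-(i:ℤ)) := by
      funext x; rw [div_eq_mul_inv, ← zpow_natCast, ← zpow_neg]
    rw [h0]
    exact (hasDerivAt_zpow (-(i:ℤ)) z (Or.inl hz)).const_mul (a i)
  have hS := HasDerivAt.fun_sum hsum
  have hlast : HasDerivAt (fun z : ℂ => 1 / ((d:ℂ) * z ^ d))
      ((d:ℂ)⁻¹ * ((↑(-(d:ℤ)) : ℂ) * z ^ (-(d:ℤ) - 1))) z := by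
    have h0 : (fun z : ℂ => 1 / ((d:ℂ) * z ^ d)) = fun z : ℂ => (d:ℂ)⁻¹ * z ^ (-(d:ℤ)) := by
      funext x; rw [one_div, mul_inv, ← zpow_natCast, ← zpow_neg]
    rw [h0]
    exact (hasDerivAt_zpow (-(d:ℤ)) z (Or.inl hz)).const_mul _
  have htotal := ((hasDerivAt_id' z).fun_add hS).fun_sub hlast
  refine htotal.congr_deriv (Eq.symm ?_)
  rw [div_eq_iff (pow_ne_zero _ hz)]
  rw [critP]
  simp only [eval_sub, eval_add, eval_pow, eval_X, eval_C, eval_finset_sum, eval_mul]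
  have hz1 : z ^ (-(d:ℤ)-1) * z^(d+1) = 1 := by
    have hexp : (-(d:ℤ)-1) + ((d+1:ℕ):ℤ) = 0 := by push_cast; ring
    rw [← zpow_natCast z (d+1), ← zpow_add₀ hz, hexp, zpow_zero]
  have hterm : ∀ i ∈ Finset.Icc 1 (d-1), a i * ((↑(-(i:ℤ)):ℂ) * z ^ (-(i:ℤ)-1)) * z^(d+1)
      = -((i:ℂ) * a i * z^(d-i)) := by
    intro i hi
    obtain ⟨h1, h2⟩ := Finset.mem_Icc.mp hi
    have hle : i ≤ d := le_trans h2 (Nat.sub_le d 1)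
    have hzp : z ^ (-(i:ℤ)-1) * z^(d+1) = z^(d-i) := by
      have hexp : (-(i:ℤ)-1) + ((d+1:ℕ):ℤ) = ((d-i:ℕ):ℤ) := by
        push_cast [Nat.cast_sub hle]; ring
      rw [← zpow_natCast z (d+1), ← zpow_add₀ hz, hexp, zpow_natCast]
    push_cast
    rw [show a i * (-(i:ℂ) * z ^ (-(i:ℤ)-1)) * z^(d+1)
        = -((i:ℂ) * a i * (z ^ (-(i:ℤ)-1) * z^(d+1))) from by ring, hzp]
  rw [sub_mul, add_mul, one_mul, Finset.sum_mul, Finset.sum_congr rfl hterm,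
    show ((d:ℂ))⁻¹ * ((↑(-(d:ℤ)):ℂ) * z ^ (-(d:ℤ)-1)) * z^(d+1)
      = -(((d:ℂ))⁻¹ * (d:ℂ)) * (z ^ (-(d:ℤ)-1) * z^(d+1)) from by push_cast; ring,
    hz1, inv_mul_cancel₀ hdz, Finset.sum_neg_distrib]
  ring


lemma AnalyticAt.hasStrictDerivAt' {f : ℂ → ℂ} {x : ℂ} (h : AnalyticAt ℂ f x) :
    HasStrictDerivAt f (deriv f x) x := by
  obtain ⟨p, hp⟩ := h
  exact hp.hasStrictDerivAt.hasDerivAt.deriv ▸ hp.hasStrictDerivAt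


lemma littleO_helper (V : ℂ → ℂ) (z₀ c₀ : ℂ) (hc0 : c₀ ≠ 0)
    (hVd : HasStrictDerivAt V c₀⁻¹ 0) (hV0 : V 0 = z₀) (u : ℂ)
    (htu : Tendsto (fun t : ℝ => (t:ℂ) * u) (nhdsWithin 0 (Set.Ioi (0:ℝ))) (nhds 0)) :
    (fun t : ℝ => V ((t:ℂ) * u) - z₀ - (t:ℂ) * (u / c₀)) =o[nhdsWithin 0 (Set.Ioi (0:ℝ))]
      (fun t : ℝ => t) := by
  have h1 := hasDerivAt_iff_isLittleO.mp hVd.hasDerivAt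
  simp only [sub_zero, hV0, smul_eq_mul] at h1
  have h2 := h1.comp_tendsto htu
  have h3 : (fun t : ℝ => (t:ℂ) * u) =O[nhdsWithin 0 (Set.Ioi (0:ℝ))] (fun t : ℝ => t) := by
    apply Asymptotics.IsBigO.of_bound ‖u‖
    filter_upwards with t
    simp only [norm_mul, Complex.norm_real, Real.norm_eq_abs]
    rw [mul_comm]
  have h4 := h2.trans_isBigO h3
  have heq : (fun t : ℝ => V ((t:ℂ) * u) - z₀ - (t:ℂ) * (u / c₀))
      = ((fun y : ℂ => V y - z₀ - y * c₀⁻¹) ∘ (fun t : ℝ => (t:ℂ) * u)) := by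
    funext t
    simp only [Function.comp_apply]
    ring_nf
  rw [heq]
  exact h4

lemma key_local (f : ℂ → ℂ) (z₀ : ℂ) (n : ℕ) (hn : 1 ≤ n) (g : ℂ → ℂ)
    (hg : AnalyticAt ℂ g z₀) (hg0 : g z₀ ≠ 0)
    (hfg : ∀ᶠ z in nhds z₀, f z - f z₀ = (z - z₀) ^ n * g z) :
    ∃ c₀ : ℂ, c₀ ≠ 0 ∧ c₀ ^ n = g z₀ ∧ ∀ u₁ u₂ : ℂ, u₁ ≠ u₂ → u₁ ^ n = u₂ ^ n →
      ∃ z₁ z₂ : ℝ → ℂ,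
        Tendsto z₁ (nhdsWithin 0 (Set.Ioi (0:ℝ))) (nhds z₀) ∧
        Tendsto z₂ (nhdsWithin 0 (Set.Ioi (0:ℝ))) (nhds z₀) ∧
        (∀ᶠ t in nhdsWithin 0 (Set.Ioi (0:ℝ)), z₁ t ≠ z₂ t ∧ f (z₁ t) = f (z₂ t)) ∧
        (fun t : ℝ => z₁ t - z₀ - (t:ℂ) * (u₁ / c₀)) =o[nhdsWithin 0 (Set.Ioi (0:ℝ))]
          (fun t : ℝ => t) ∧
        (fun t : ℝ => z₂ t - z₀ - (t:ℂ) * (u₂ / c₀)) =o[nhdsWithin 0 (Set.Ioi (0:ℝ))]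
          (fun t : ℝ => t) := by
  have hnC : ((n:ℂ)) ≠ 0 := Nat.cast_ne_zero.mpr (by omega)
  set c₀ : ℂ := Complex.exp (Complex.log (g z₀) / n) with hc₀def
  have hc0 : c₀ ≠ 0 := Complex.exp_ne_zero _
  have hc0n : c₀ ^ n = g z₀ := by
    rw [hc₀def, ← Complex.exp_nat_mul, mul_div_cancel₀ _ hnC, Complex.exp_log hg0]
  set ψ : ℂ → ℂ := fun z => c₀ * Complex.exp (Complex.log (g z / g z₀) / n) with hψdef
  have hψz₀ : ψ z₀ = c₀ := by
    simp [hψdef, div_self hg0, Complex.log_one]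
  have hdiv : AnalyticAt ℂ (fun z => g z / g z₀) z₀ := hg.div analyticAt_const hg0
  have hψa : AnalyticAt ℂ ψ z₀ := by
    apply analyticAt_const.mul
    apply AnalyticAt.cexp
    apply AnalyticAt.div _ analyticAt_const hnC
    exact (analyticAt_clog (by rw [div_self hg0]; exact Complex.one_mem_slitPlane)).comp hdiv
  have hgcont : ContinuousAt g z₀ := hg.continuousAt
  have hev1 : ∀ᶠ z in nhds z₀, g z ≠ 0 := hgcont.eventually_ne hg0
  have hev2 : ∀ᶠ z in nhds z₀, g z / g z₀ ∈ Complex.slitPlane := by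
    have hc : ContinuousAt (fun z => g z / g z₀) z₀ := hgcont.div continuousAt_const hg0
    have : g z₀ / g z₀ ∈ Complex.slitPlane := by rw [div_self hg0]; exact Complex.one_mem_slitPlane
    exact hc.eventually_mem (Complex.isOpen_slitPlane.mem_nhds this)
  have hψn : ∀ᶠ z in nhds z₀, ψ z ^ n = g z := by
    filter_upwards [hev1, hev2] with z h1 h2
    rw [hψdef]
    simp only
    rw [mul_pow, hc0n, ← Complex.exp_nat_mul, mul_div_cancel₀ _ hnC,
      Complex.exp_log (div_ne_zero h1 hg0), mul_div_cancel₀ _ hg0]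
  set h : ℂ → ℂ := fun z => (z - z₀) * ψ z with hhdef
  have hh0 : h z₀ = 0 := by simp [hhdef]
  have hψsd : HasStrictDerivAt ψ (deriv ψ z₀) z₀ := hψa.hasStrictDerivAt'
  have hhd : HasStrictDerivAt h c₀ z₀ := by
    have h1 : HasStrictDerivAt (fun z : ℂ => z - z₀) 1 z₀ :=
      (hasStrictDerivAt_id z₀).sub_const z₀
    have := h1.mul hψsd
    simp only [hψz₀, sub_self, zero_mul, add_zero, one_mul] at this
    exact this
  -- the local inverse
  set V : ℂ → ℂ := hhd.localInverse h c₀ z₀ hc0 with hVdef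
  have hV0 : V 0 = z₀ := by
    have := (hhd.hasStrictFDerivAt_equiv hc0).localInverse_apply_image
    rwa [hh0] at this
  have hVd : HasStrictDerivAt V c₀⁻¹ 0 := by
    have := hhd.to_localInverse (hf' := hc0)
    rwa [hh0] at this
  have hright : ∀ᶠ y in nhds (0:ℂ), h (V y) = y := by
    have := (hhd.hasStrictFDerivAt_equiv hc0).eventually_right_inverse
    rwa [hh0] at this
  have hfh : ∀ᶠ z in nhds z₀, f z - f z₀ = (h z) ^ n := by
    filter_upwards [hfg, hψn] with z h1 h2
    rw [h1, hhdef]; simp only [mul_pow, h2]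
  refine ⟨c₀, hc0, hc0n, ?_⟩
  intro u₁ u₂ hu12 hupow
  have htu : ∀ u : ℂ, Tendsto (fun t : ℝ => (t:ℂ) * u) (nhdsWithin 0 (Set.Ioi (0:ℝ))) (nhds 0) := by
    intro u
    have hcont : Continuous fun t : ℝ => (t:ℂ) * u := by continuity
    have := hcont.tendsto' 0 0 (by simp)
    exact this.mono_left nhdsWithin_le_nhds
  have hVcont : ContinuousAt V 0 := hVd.hasDerivAt.continuousAt
  have hVt : Tendsto V (nhds 0) (nhds z₀) := by rw [← hV0]; exact hVcont.tendsto
  refine ⟨fun t => V ((t:ℂ) * u₁), fun t => V ((t:ℂ) * u₂), ?_, ?_, ?_, ?_, ?_⟩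
  · exact hVt.comp (htu u₁)
  · exact hVt.comp (htu u₂)
  · have hr1 : ∀ᶠ t : ℝ in nhdsWithin 0 (Set.Ioi (0:ℝ)), h (V ((t:ℂ) * u₁)) = (t:ℂ) * u₁ :=
      (htu u₁).eventually hright
    have hr2 : ∀ᶠ t : ℝ in nhdsWithin 0 (Set.Ioi (0:ℝ)), h (V ((t:ℂ) * u₂)) = (t:ℂ) * u₂ :=
      (htu u₂).eventually hright
    have hf1 := ((hVt.comp (htu u₁))).eventually hfh
    have hf2 := ((hVt.comp (htu u₂))).eventually hfh
    have hpos : ∀ᶠ t in nhdsWithin 0 (Set.Ioi (0:ℝ)), t ∈ Set.Ioi (0:ℝ) :=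
      eventually_mem_nhdsWithin
    filter_upwards [hr1, hr2, hf1, hf2, hpos] with t h1 h2 h3 h4 h5
    have htne : ((t:ℂ)) ≠ 0 := by
      simp only [ne_eq, Complex.ofReal_eq_zero]
      exact ne_of_gt h5
    constructor
    · intro heq
      apply hu12
      have : (t:ℂ) * u₁ = (t:ℂ) * u₂ := by rw [← h1, ← h2, heq]
      exact mul_left_cancel₀ htne this
    · have e1 : f (V ((t:ℂ) * u₁)) - f z₀ = ((t:ℂ) * u₁) ^ n := by
        rw [Function.comp] at h3; rw [h3, h1]
      have e2 : f (V ((t:ℂ) * u₂)) - f z₀ = ((t:ℂ) * u₂) ^ n := by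
        rw [Function.comp] at h4; rw [h4, h2]
      have : ((t:ℂ) * u₁) ^ n = ((t:ℂ) * u₂) ^ n := by
        rw [mul_pow, mul_pow, hupow]
      have := e1.trans (this.trans e2.symm)
      linear_combination this
  · exact littleO_helper V z₀ c₀ hc0 hVd hV0 u₁ (htu u₁)
  · exact littleO_helper V z₀ c₀ hc0 hVd hV0 u₂ (htu u₂)


lemma order_lemma (f : ℂ → ℂ) (P : Polynomial ℂ) (hP : P ≠ 0) (N : ℕ) (z₀ : ℂ) (hz₀ : z₀ ≠ 0)
    (hdiff : ∀ z : ℂ, z ≠ 0 → HasDerivAt f (P.eval z / z ^ N) z) :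
    ∃ g : ℂ → ℂ, AnalyticAt ℂ g z₀ ∧ g z₀ ≠ 0 ∧
      ∀ᶠ z in nhds z₀, f z - f z₀ = (z - z₀) ^ (P.rootMultiplicity z₀ + 1) * g z := by
  set m := P.rootMultiplicity z₀ with hmdef
  set Q := P /ₘ (X - C z₀) ^ m with hQdef
  have hQ : (X - C z₀) ^ m * Q = P := P.pow_mul_divByMonic_rootMultiplicity_eq z₀
  have hQ0 : Q.eval z₀ ≠ 0 := eval_divByMonic_pow_rootMultiplicity_ne_zero z₀ hP
  -- f is analytic on the complement of 0
  have hU : IsOpen {z : ℂ | z ≠ 0} := isOpen_compl_singleton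
  have hfd : DifferentiableOn ℂ f {z : ℂ | z ≠ 0} := fun z hz =>
    ((hdiff z hz).differentiableAt).differentiableWithinAt
  have hfa : AnalyticAt ℂ f z₀ := hfd.analyticAt (hU.mem_nhds hz₀)
  have hFa : AnalyticAt ℂ (fun z => f z - f z₀) z₀ := hfa.sub analyticAt_const
  -- deriv f equals D off 0
  set D : ℂ → ℂ := fun z => P.eval z / z ^ N with hDdef
  have hderiv_eq : ∀ z : ℂ, z ≠ 0 → deriv f z = D z := fun z hz => (hdiff z hz).deriv
  have hDa : AnalyticAt ℂ D z₀ :=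
    (P.differentiable.analyticAt z₀).div ((differentiable_pow N).analyticAt z₀)
      (pow_ne_zero N hz₀)
  have hne : ∀ᶠ z in nhds z₀, z ≠ 0 := isOpen_compl_singleton.eventually_mem hz₀
  -- D has order m at z₀
  have hDorder_m : analyticOrderAt D z₀ = (m : ENat) := by
    rw [hDa.analyticOrderAt_eq_natCast]
    refine ⟨fun z => Q.eval z / z ^ N, (Q.differentiable.analyticAt z₀).div
      ((differentiable_pow N).analyticAt z₀) (pow_ne_zero N hz₀),
      div_ne_zero hQ0 (pow_ne_zero N hz₀), ?_⟩
    filter_upwards [hne] with z hz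
    rw [hDdef]
    simp only [smul_eq_mul]
    rw [← hQ]
    simp [eval_mul, eval_pow, eval_sub, eval_X, eval_C, mul_div_assoc]
  -- F is not eventually zero
  have hFne : ¬ (∀ᶠ z in nhds z₀, f z - f z₀ = 0) := by
    intro hev
    have hd0 : ∀ᶠ z in nhds z₀, deriv f z = 0 := by
      have h1 : (fun z => f z - f z₀) =ᶠ[nhds z₀] (fun _ => (0:ℂ)) := hev
      have h2 := h1.deriv
      filter_upwards [h2] with z hz
      have : deriv (fun z => f z - f z₀) z = deriv f z := by
        simp [deriv_sub_const]
      rw [← this, hz, deriv_const]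
    -- find a point near z₀ avoiding 0 and roots of P where this fails
    have hroots : {z : ℂ | P.IsRoot z}.Finite := Polynomial.finite_setOf_isRoot hP
    have hbad : ∀ᶠ z in nhdsWithin z₀ {z₀}ᶜ, z ∉ insert (0:ℂ) {z : ℂ | P.IsRoot z} := by
      have hfin : (insert (0:ℂ) {z : ℂ | P.IsRoot z} \ {z₀}).Finite := (hroots.insert 0).diff
      have hcl : IsClosed (insert (0:ℂ) {z : ℂ | P.IsRoot z} \ {z₀}) := hfin.isClosed
      have hz₀n : z₀ ∉ insert (0:ℂ) {z : ℂ | P.IsRoot z} \ {z₀} := by simp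
      have := hcl.isOpen_compl.eventually_mem hz₀n
      have h2 : ∀ᶠ z in nhdsWithin z₀ {z₀}ᶜ, z ∈ (insert (0:ℂ) {z : ℂ | P.IsRoot z} \ {z₀})ᶜ :=
        this.filter_mono nhdsWithin_le_nhds
      filter_upwards [h2, self_mem_nhdsWithin] with z h1 hzne
      simp only [Set.mem_compl_iff, Set.mem_diff, not_and, not_not] at h1
      intro hmem
      exact hzne (h1 hmem)
    have hd0' : ∀ᶠ z in nhdsWithin z₀ {z₀}ᶜ, deriv f z = 0 := hd0.filter_mono nhdsWithin_le_nhds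
    obtain ⟨z, hz1, hz2⟩ := (hd0'.and hbad).exists
    simp only [Set.mem_insert_iff, not_or, Set.mem_setOf_eq] at hz2
    obtain ⟨hzne0, hznr⟩ := hz2
    rw [hderiv_eq z hzne0, hDdef] at hz1
    simp only at hz1
    rcases div_eq_zero_iff.mp hz1 with h | h
    · exact hznr h
    · exact pow_ne_zero N hzne0 h
  -- extract the finite order of F
  have hord_ne_top : analyticOrderAt (fun z => f z - f z₀) z₀ ≠ ⊤ := fun h => hFne (analyticOrderAt_eq_top.mp h)
  obtain ⟨n, hn⟩ : ∃ n : ℕ, analyticOrderAt (fun z => f z - f z₀) z₀ = (n : ENat) := by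
    lift analyticOrderAt (fun z => f z - f z₀) z₀ to ℕ using hord_ne_top with k hk
    exact ⟨k, rfl⟩
  obtain ⟨g, hg, hg0, hgev⟩ := hFa.analyticOrderAt_eq_natCast.mp hn
  have hn1 : 1 ≤ n := by
    by_contra hn0
    push_neg at hn0
    interval_cases n
    have := hgev.self_of_nhds
    simp at this
    exact hg0 this.symm
  -- compute the order of D as n - 1
  obtain ⟨s, hs_mem, hs_an⟩ := hg.exists_mem_nhds_analyticOnNhd
  have hdg : AnalyticAt ℂ (deriv g) z₀ := hs_an.deriv z₀ (mem_of_mem_nhds hs_mem)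
  set G : ℂ → ℂ := fun z => (n : ℂ) * g z + (z - z₀) * deriv g z with hGdef
  have hGa : AnalyticAt ℂ G z₀ := by
    apply AnalyticAt.add
    · exact analyticAt_const.mul hg
    · exact ((analyticAt_id.sub analyticAt_const)).mul hdg
  have hG0 : G z₀ ≠ 0 := by
    simp only [hGdef, sub_self, zero_mul, add_zero]
    exact mul_ne_zero (Nat.cast_ne_zero.mpr (by omega)) hg0
  have hDorder_n : analyticOrderAt D z₀ = ((n - 1 : ℕ) : ENat) := by
    rw [hDa.analyticOrderAt_eq_natCast]
    refine ⟨G, hGa, hG0, ?_⟩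
    have hev_deriv : deriv (fun w => f w - f z₀) =ᶠ[nhds z₀]
        deriv (fun w => (w - z₀) ^ n * g w) := EventuallyEq.deriv (by
          filter_upwards [hgev] with z hz
          simpa [smul_eq_mul] using hz)
    filter_upwards [hev_deriv, hne, eventually_mem_nhds_iff.mpr hs_mem] with z h1 h2 h3
    have hgz : AnalyticAt ℂ g z := hs_an z (mem_of_mem_nhds h3)
    have hd1 : HasDerivAt (fun w => (w - z₀) ^ n * g w)
        ((n : ℂ) * (z - z₀) ^ (n - 1) * g z + (z - z₀) ^ n * deriv g z) z := by
      have ha : HasDerivAt (fun w : ℂ => (w - z₀) ^ n) ((n : ℂ) * (z - z₀) ^ (n - 1)) z := by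
        have := ((hasDerivAt_id z).sub_const z₀).pow n
        simp at this
        exact this
      have hb : HasDerivAt g (deriv g z) z := hgz.differentiableAt.hasDerivAt
      exact ha.mul hb
    have : deriv f z = (n : ℂ) * (z - z₀) ^ (n - 1) * g z + (z - z₀) ^ n * deriv g z := by
      rw [show deriv f z = deriv (fun w => f w - f z₀) z by simp [deriv_sub_const], h1, hd1.deriv]
    rw [← hderiv_eq z h2, this, smul_eq_mul, hGdef]
    have hpow : (z - z₀) ^ n = (z - z₀) ^ (n - 1) * (z - z₀) := by
      rw [← pow_succ]
      congr 1
      omega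
    rw [hpow]
    ring
  -- conclude n = m + 1
  have : (m : ENat) = ((n - 1 : ℕ) : ENat) := hDorder_m ▸ hDorder_n
  have hmn : m = n - 1 := by exact_mod_cast this
  have hnm : n = m + 1 := by omega
  refine ⟨g, hg, hg0, ?_⟩
  filter_upwards [hgev] with z hz
  rw [← hnm]
  simpa [smul_eq_mul] using hz


lemma ms_prod_le_one (s : Multiset ℝ) (h : ∀ x ∈ s, 0 ≤ x ∧ x ≤ 1) : s.prod ≤ 1 := by
  induction s using Multiset.induction with
  | empty => simp
  | cons a s ih =>
    rw [Multiset.prod_cons]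
    obtain ⟨ha0, ha1⟩ := h a (Multiset.mem_cons_self a s)
    have hs : ∀ x ∈ s, 0 ≤ x ∧ x ≤ 1 := fun x hx => h x (Multiset.mem_cons_of_mem hx)
    have h1 := ih hs
    have h2 : 0 ≤ s.prod := Multiset.prod_nonneg (fun x hx => (hs x hx).1)
    nlinarith

lemma ms_all_one (s : Multiset ℝ) (h0 : ∀ x ∈ s, 0 < x) (h1 : ∀ x ∈ s, x ≤ 1)
    (hp : s.prod = 1) : ∀ x ∈ s, x = 1 := by
  intro x hx
  have hcons : x ::ₘ s.erase x = s := Multiset.cons_erase hx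
  have hprod : x * (s.erase x).prod = 1 := by
    rw [← Multiset.prod_cons, hcons, hp]
  have herase : (s.erase x).prod ≤ 1 := by
    apply ms_prod_le_one
    intro y hy
    have hys := Multiset.mem_of_mem_erase hy
    exact ⟨le_of_lt (h0 y hys), h1 y hys⟩
  have hx0 := h0 x hx
  have hx1 := h1 x hx
  nlinarith

lemma exp_theta_ne_one (θ : ℝ) (hθpos : 0 < θ) (hθlt : θ < 2 * Real.pi) :
    Complex.exp (↑θ * Complex.I) ≠ 1 := by
  intro heq
  obtain ⟨k, hk⟩ := Complex.exp_eq_one_iff.mp heq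
  have hπ := Real.pi_pos
  have him : θ = (k : ℝ) * (2 * Real.pi) := by
    have h1 : ((θ : ℂ) * Complex.I).im = θ := by simp
    have h2 : ((k : ℂ) * (2 * (Real.pi : ℂ) * Complex.I)).im = (k : ℝ) * (2 * Real.pi) := by
      have : ((k : ℂ) * (2 * (Real.pi : ℂ) * Complex.I))
          = ((((k : ℝ) * (2 * Real.pi)) : ℝ) : ℂ) * Complex.I := by
        push_cast
        ring
      rw [this]
      simp
    rw [← h1, hk, h2]
  rcases le_or_gt k 0 with hk0 | hk0
  · have : (k : ℝ) ≤ 0 := by exact_mod_cast hk0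
    nlinarith
  · have : (1 : ℝ) ≤ (k : ℝ) := by exact_mod_cast hk0
    nlinarith

lemma eventually_abs_gt_one (z₀ v : ℂ) (habs : ‖z₀‖ = 1)
    (hre : 0 < ((starRingEnd ℂ) z₀ * v).re) (z : ℝ → ℂ)
    (hlo : (fun t : ℝ => z t - z₀ - (t : ℂ) * v) =o[nhdsWithin 0 (Set.Ioi (0:ℝ))]
      (fun t : ℝ => t)) :
    ∀ᶠ t in nhdsWithin 0 (Set.Ioi (0:ℝ)), 1 < ‖z t‖ := by
  set c₁ := ((starRingEnd ℂ) z₀ * v).re with hc₁def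
  have hbound := hlo.def (half_pos hre)
  filter_upwards [hbound, self_mem_nhdsWithin] with t hb ht
  have htpos : (0:ℝ) < t := ht
  have h1 : ((starRingEnd ℂ) z₀ * z t).re ≤ ‖z t‖ := by
    calc ((starRingEnd ℂ) z₀ * z t).re ≤ ‖(starRingEnd ℂ) z₀ * z t‖ :=
          Complex.re_le_norm _
      _ = ‖z t‖ := by
          rw [norm_mul, Complex.norm_conj, habs, one_mul]
  have hsplit : (starRingEnd ℂ) z₀ * z t = (starRingEnd ℂ) z₀ * z₀
      + (t : ℂ) * ((starRingEnd ℂ) z₀ * v)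
      + (starRingEnd ℂ) z₀ * (z t - z₀ - (t : ℂ) * v) := by ring
  have hre1 : ((starRingEnd ℂ) z₀ * z₀).re = 1 := by
    rw [mul_comm, Complex.mul_conj]
    simp [Complex.normSq_eq_norm_sq, habs]
  have hre2 : ((t : ℂ) * ((starRingEnd ℂ) z₀ * v)).re = t * c₁ := by
    rw [Complex.re_ofReal_mul]
  have hre3 : |((starRingEnd ℂ) z₀ * (z t - z₀ - (t : ℂ) * v)).re| ≤ c₁ / 2 * t := by
    calc |((starRingEnd ℂ) z₀ * (z t - z₀ - (t : ℂ) * v)).re|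
        ≤ ‖(starRingEnd ℂ) z₀ * (z t - z₀ - (t : ℂ) * v)‖ := Complex.abs_re_le_norm _
      _ = ‖z t - z₀ - (t : ℂ) * v‖ := by
          rw [norm_mul, Complex.norm_conj, habs, one_mul]
      _ ≤ c₁ / 2 * ‖t‖ := hb
      _ = c₁ / 2 * t := by rw [Real.norm_eq_abs, abs_of_pos htpos]
  have := congrArg Complex.re hsplit
  simp only [Complex.add_re] at this
  rw [hre1, hre2] at this
  have habs3 := abs_le.mp hre3
  have : 1 < ((starRingEnd ℂ) z₀ * z t).re := by
    rw [this]
    nlinarith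
  linarith

lemma no_bad_root (f : ℂ → ℂ) (P : Polynomial ℂ) (hP : P ≠ 0) (N : ℕ)
    (hdiff : ∀ z : ℂ, z ≠ 0 → HasDerivAt f (P.eval z / z ^ N) z)
    (hinj : Set.InjOn f {z : ℂ | 1 < ‖z‖})
    (r : ℂ) (hr : P.IsRoot r) (hrne : r ≠ 0) :
    ‖r‖ ≤ 1 ∧ (‖r‖ = 1 → rootMultiplicity r P = 1) := by
  set m := rootMultiplicity r P with hmdef
  have hm1 : 1 ≤ m := (rootMultiplicity_pos hP).mpr hr
  obtain ⟨g, hg, hg0, hfg⟩ := order_lemma f P hP N r hrne hdiff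
  obtain ⟨c₀, hc0, hc0n, hkey⟩ := key_local f r (m + 1) (by omega) g hg hg0 hfg
  have hopen : IsOpen {z : ℂ | 1 < ‖z‖} :=
    isOpen_lt continuous_const continuous_norm
  have hπ := Real.pi_pos
  have hnR : (0:ℝ) < ((m + 1 : ℕ) : ℝ) := by positivity
  constructor
  · by_contra hgt
    push_neg at hgt
    set u₂ := Complex.exp (↑(2 * Real.pi / ((m + 1 : ℕ) : ℝ)) * Complex.I) with hu₂def
    have hu2ne : u₂ ≠ 1 := by
      apply exp_theta_ne_one _ (by positivity)
      rw [div_lt_iff₀ hnR]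
      have h1 : (2:ℝ) ≤ ((m + 1 : ℕ) : ℝ) := by exact_mod_cast (by omega : 2 ≤ m + 1)
      nlinarith
    have hmC : ((m:ℂ) + 1) ≠ 0 := by
      have : ((m:ℝ) + 1) ≠ 0 := by positivity
      exact_mod_cast this
    have hupow : (1:ℂ) ^ (m+1) = u₂ ^ (m+1) := by
      rw [one_pow, hu₂def, ← Complex.exp_nat_mul]
      rw [show ((m+1:ℕ):ℂ) * (↑(2 * Real.pi / ((m+1:ℕ):ℝ)) * Complex.I)
          = 2 * ↑Real.pi * Complex.I by
        push_cast
        field_simp]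
      exact Complex.exp_two_pi_mul_I.symm
    obtain ⟨z₁, z₂, ht1, ht2, hev, -, -⟩ := hkey 1 u₂ (Ne.symm hu2ne) hupow
    have hmem : r ∈ {z : ℂ | 1 < ‖z‖} := hgt
    have hm1' := ht1.eventually (hopen.eventually_mem hmem)
    have hm2' := ht2.eventually (hopen.eventually_mem hmem)
    obtain ⟨t, ⟨hne', hfeq'⟩, h1', h2'⟩ := (hev.and (hm1'.and hm2')).exists
    exact hne' (hinj h1' h2' hfeq')
  · intro habs1
    by_contra hm2'
    have hm2 : 2 ≤ m := by omega
    set w := (starRingEnd ℂ) r / c₀ with hwdef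
    have hconjr : (starRingEnd ℂ) r ≠ 0 := by simpa using hrne
    have hw : w ≠ 0 := div_ne_zero hconjr hc0
    have hwabs : (0:ℝ) < ‖w‖ := norm_pos_iff.mpr hw
    set θ := Real.pi / ((m + 1 : ℕ) : ℝ) with hθdef
    have hθpos : 0 < θ := by positivity
    have hθlt : θ < Real.pi / 2 := by
      rw [hθdef, div_lt_div_iff₀ hnR (by norm_num)]
      have h2 : (2:ℝ) < ((m+1:ℕ):ℝ) := by exact_mod_cast (by omega : 2 < m + 1)
      nlinarith
    set ζ := Complex.exp (↑θ * Complex.I) with hζdef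
    have hζ0 : ζ ≠ 0 := Complex.exp_ne_zero _
    set b := (starRingEnd ℂ) w / (↑(‖w‖) : ℂ) with hbdef
    have habsne : ((‖w‖ : ℝ) : ℂ) ≠ 0 := by exact_mod_cast ne_of_gt hwabs
    have hb0 : b ≠ 0 := div_ne_zero (by simpa using hw) habsne
    have hζsq : ζ * ζ ≠ 1 := by
      have heq : ζ * ζ = Complex.exp (↑(2*θ) * Complex.I) := by
        rw [hζdef, ← Complex.exp_add]
        push_cast
        ring_nf
      rw [heq]
      apply exp_theta_ne_one _ (by linarith)
      linarith
    have hmC : ((m:ℂ) + 1) ≠ 0 := by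
      have : ((m:ℝ) + 1) ≠ 0 := by positivity
      exact_mod_cast this
    have hζn : ζ ^ (m+1) = -1 := by
      rw [hζdef, ← Complex.exp_nat_mul]
      rw [show ((m+1:ℕ):ℂ) * (↑θ * Complex.I) = ↑Real.pi * Complex.I by
        rw [hθdef]
        push_cast
        field_simp]
      exact Complex.exp_pi_mul_I
    have hu12 : b * ζ ≠ b * ζ⁻¹ := by
      intro h
      have h2 : ζ = ζ⁻¹ := mul_left_cancel₀ hb0 h
      apply hζsq
      nth_rewrite 2 [h2]
      exact mul_inv_cancel₀ hζ0
    have hupow : (b * ζ) ^ (m+1) = (b * ζ⁻¹) ^ (m+1) := by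
      rw [mul_pow, mul_pow, inv_pow, hζn]
      norm_num
    obtain ⟨z₁, z₂, ht1, ht2, hev, hlo1, hlo2⟩ := hkey (b * ζ) (b * ζ⁻¹) hu12 hupow
    have hwb : w * b = (↑(‖w‖) : ℂ) := by
      rw [hbdef, ← mul_div_assoc, Complex.mul_conj, Complex.normSq_eq_norm_sq]
      push_cast
      rw [sq]
      field_simp
    have hre1 : 0 < ((starRingEnd ℂ) r * (b * ζ / c₀)).re := by
      have heq : (starRingEnd ℂ) r * (b * ζ / c₀) = ((‖w‖ : ℝ) : ℂ) * ζ := by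
        rw [← hwb, hwdef]
        field_simp
      rw [heq, Complex.re_ofReal_mul, hζdef, Complex.exp_ofReal_mul_I_re]
      exact mul_pos hwabs (Real.cos_pos_of_mem_Ioo ⟨by linarith, hθlt⟩)
    have hζinv : ζ⁻¹ = Complex.exp (↑(-θ) * Complex.I) := by
      rw [hζdef, ← Complex.exp_neg]
      push_cast
      ring_nf
    have hre2 : 0 < ((starRingEnd ℂ) r * (b * ζ⁻¹ / c₀)).re := by
      have heq : (starRingEnd ℂ) r * (b * ζ⁻¹ / c₀) = ((‖w‖ : ℝ) : ℂ) * ζ⁻¹ := by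
        rw [← hwb, hwdef]
        field_simp
      rw [heq, hζinv, Complex.re_ofReal_mul, Complex.exp_ofReal_mul_I_re]
      apply mul_pos hwabs
      rw [Real.cos_neg]
      exact Real.cos_pos_of_mem_Ioo ⟨by linarith, hθlt⟩
    have hgt1 := eventually_abs_gt_one r (b * ζ / c₀) habs1 hre1 z₁ hlo1
    have hgt2 := eventually_abs_gt_one r (b * ζ⁻¹ / c₀) habs1 hre2 z₂ hlo2
    obtain ⟨t, ⟨hne', hfeq'⟩, h1', h2'⟩ := (hev.and (hgt1.and hgt2)).exists
    exact hne' (hinj h1' h2' hfeq')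

end AuxCrit

/-- **Critical points of maps in `Σ_d^*`.** If
`f(z) = z + a₁/z + ⋯ + a_{d−1}/z^{d−1} − 1/(d·z^d)` is injective on
`𝔻* = {|z| > 1}`, then `f′` has exactly `d + 1` zeros in `ℂ ∖ {0}` counted with
multiplicity: they are pairwise distinct, simple, and all lie on the unit circle. -/
theorem critical_points_of_truncated_univalent
    (d : ℕ) (hd : 2 ≤ d) (a : ℕ → ℂ)
    (f : ℂ → ℂ)
    (hf : ∀ z : ℂ, f z =
      z + (∑ i ∈ Finset.Icc 1 (d - 1), a i / z ^ i) - 1 / ((d : ℂ) * z ^ d))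
    (hinj : Set.InjOn f {z : ℂ | 1 < ‖z‖}) :
    ∃ zs : Fin (d + 1) → ℂ,
      Function.Injective zs ∧
      (∀ i, zs i ∈ S1) ∧
      (∀ z : ℂ, z ≠ 0 → (deriv f z = 0 ↔ ∃ i, z = zs i)) ∧
      (∀ i, deriv f (zs i) = 0 ∧ deriv (deriv f) (zs i) ≠ 0) := by
  classical
  have hfeq : f = fun z : ℂ => z + (∑ i ∈ Finset.Icc 1 (d - 1), a i / z ^ i)
      - 1 / ((d : ℂ) * z ^ d) := funext hf
  have hPne : critP d a ≠ 0 := (critP_monic d hd a).ne_zero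
  have hder : ∀ z : ℂ, z ≠ 0 → HasDerivAt f ((critP d a).eval z / z ^ (d + 1)) z := by
    intro z hz
    rw [hfeq]
    exact f_hasDerivAt d hd a z hz
  have hderiv : ∀ z : ℂ, z ≠ 0 → deriv f z = (critP d a).eval z / z ^ (d + 1) :=
    fun z hz => (hder z hz).deriv
  have hroot_ne : ∀ r : ℂ, (critP d a).IsRoot r → r ≠ 0 := by
    intro r hr h0
    rw [h0, Polynomial.IsRoot, critP_eval_zero d hd a] at hr
    exact one_ne_zero hr
  have hbad := fun (r : ℂ) (hr : (critP d a).IsRoot r) =>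
    no_bad_root f (critP d a) hPne (d + 1) hder hinj r hr (hroot_ne r hr)
  -- all roots are on the unit circle
  have habs1 : ∀ r ∈ (critP d a).roots, ‖r‖ = 1 := by
    intro r hr
    refine ms_all_one ((critP d a).roots.map (fun z : ℂ => ‖z‖)) ?_ ?_
      (critP_roots_abs_prod d hd a) (‖r‖) (Multiset.mem_map_of_mem _ hr)
    · intro x hx
      obtain ⟨y, hy, rfl⟩ := Multiset.mem_map.mp hx
      exact norm_pos_iff.mpr (hroot_ne y ((Polynomial.mem_roots hPne).mp hy))
    · intro x hx
      obtain ⟨y, hy, rfl⟩ := Multiset.mem_map.mp hx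
      exact (hbad y ((Polynomial.mem_roots hPne).mp hy)).1
  have hmult1 : ∀ r ∈ (critP d a).roots,
      Polynomial.rootMultiplicity r (critP d a) = 1 := by
    intro r hr
    exact (hbad r ((Polynomial.mem_roots hPne).mp hr)).2 (habs1 r hr)
  have hnodup : (critP d a).roots.Nodup := by
    rw [Multiset.nodup_iff_count_le_one]
    intro r
    by_cases hr : r ∈ (critP d a).roots
    · rw [Polynomial.count_roots]
      exact le_of_eq (hmult1 r hr)
    · rw [Multiset.count_eq_zero_of_notMem hr]
      norm_num
  have hcard : (critP d a).roots.toFinset.card = d + 1 := by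
    rw [Multiset.toFinset_card_of_nodup hnodup, critP_roots_card d hd a]
  set s : Finset ℂ := (critP d a).roots.toFinset with hsdef
  set e := s.equivFin with hedef
  set zs : Fin (d + 1) → ℂ := fun i => (e.symm (Fin.cast hcard.symm i) : ℂ) with hzsdef
  have hzs_mem : ∀ i, zs i ∈ s := fun i => (e.symm (Fin.cast hcard.symm i)).2
  have hzs_root : ∀ i, (critP d a).IsRoot (zs i) := fun i =>
    (Polynomial.mem_roots hPne).mp (Multiset.mem_toFinset.mp (hzs_mem i))
  have hzs_roots : ∀ i, zs i ∈ (critP d a).roots := fun i =>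
    Multiset.mem_toFinset.mp (hzs_mem i)
  have hzs_ne : ∀ i, zs i ≠ 0 := fun i => hroot_ne _ (hzs_root i)
  refine ⟨zs, ?_, ?_, ?_, ?_⟩
  · intro i j hij
    have h1 := e.symm.injective (Subtype.coe_injective hij)
    exact Fin.ext (by simpa using congrArg Fin.val h1)
  · intro i
    exact habs1 _ (hzs_roots i)
  · intro z hz
    rw [hderiv z hz]
    constructor
    · intro h0
      rcases div_eq_zero_iff.mp h0 with h | h
      · have hzs' : z ∈ s := Multiset.mem_toFinset.mpr ((Polynomial.mem_roots hPne).mpr h)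
        refine ⟨Fin.cast hcard (e ⟨z, hzs'⟩), ?_⟩
        simp [hzsdef]
      · exact (pow_ne_zero _ hz h).elim
    · rintro ⟨i, rfl⟩
      rw [div_eq_zero_iff]
      exact Or.inl (hzs_root i)
  · intro i
    have hrne := hzs_ne i
    have hroot := hzs_root i
    constructor
    · rw [hderiv _ hrne, hroot, zero_div]
    · -- second derivative is nonzero
      set r := zs i with hrdef
      have hm1 : Polynomial.rootMultiplicity r (critP d a) = 1 := hmult1 _ (hzs_roots i)
      have hQ := (critP d a).pow_mul_divByMonic_rootMultiplicity_eq r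
      have hQ0 := Polynomial.eval_divByMonic_pow_rootMultiplicity_ne_zero r hPne
      rw [hm1, pow_one] at hQ hQ0
      have hP' : ((critP d a).derivative).eval r
          = ((critP d a) /ₘ (Polynomial.X - Polynomial.C r)).eval r := by
        conv_lhs => rw [← hQ]
        simp [Polynomial.derivative_mul, Polynomial.derivative_sub, Polynomial.derivative_X,
          Polynomial.derivative_C, Polynomial.eval_add, Polynomial.eval_mul,
          Polynomial.eval_sub, Polynomial.eval_X, Polynomial.eval_C]
      have hevD : deriv f =ᶠ[nhds r] (fun z => (critP d a).eval z / z ^ (d + 1)) := by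
        filter_upwards [isOpen_compl_singleton.eventually_mem hrne] with z hz
        exact hderiv z hz
      have hD : HasDerivAt (fun z : ℂ => (critP d a).eval z / z ^ (d + 1))
          ((((critP d a).derivative).eval r * r ^ (d + 1)
            - (critP d a).eval r * (((d : ℂ) + 1) * r ^ (d + 1 - 1))) / (r ^ (d + 1)) ^ 2) r := by
        have h1 := (critP d a).hasDerivAt r
        have h2 := hasDerivAt_pow (d + 1) r
        have := h1.div h2 (pow_ne_zero _ hrne)
        refine this.congr_deriv ?_
        push_cast
        ring
      have : deriv (deriv f) r = ((((critP d a).derivative).eval r * r ^ (d + 1)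
          - (critP d a).eval r * (((d : ℂ) + 1) * r ^ (d + 1 - 1))) / (r ^ (d + 1)) ^ 2) := by
        rw [hevD.deriv_eq, hD.deriv]
      rw [this, hroot]
      apply div_ne_zero
      · simp only [zero_mul, sub_zero]
        exact mul_ne_zero (by rw [hP']; exact hQ0) (pow_ne_zero _ hrne)
      · exact pow_ne_zero _ (pow_ne_zero _ hrne)
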